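/- Assume k is even with k ≥ 2 and p_j > 0 for all j; let p_min = min_j p_j and ‖p‖₂ the Euclidean norm of p. Let 0 < η ≤ 1/(10·k²·‖p‖₂), and define the gradient-descent iterates w(t+1) = w(t) − η·G(w(t)), where G(w)_j = k·p_j·(B(w)^{k−1} w_j − A(w)^{k−1} w*_j). If the initialization w(0) satisfies 0 < B(w(0)) ≤ |A(w(0))|, then for every t ≥ 0, L(w(t)) ≤ (1 − η·k·p_min·A(w(0))^{2k−2}/8)^t · L(w(0)). -/

import Mathlib

/-- AM-GM style: `(j+1) a b^j ≤ a^(j+1) + j b^(j+1)` for nonneg a,b. -/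
lemma amgm_aux (j : ℕ) : ∀ a b : ℝ, 0 ≤ a → 0 ≤ b →
    (j + 1 : ℝ) * a * b ^ j ≤ a ^ (j + 1) + (j : ℝ) * b ^ (j + 1) := by
  induction j with
  | zero => intro a b ha hb; simp
  | succ n ih =>
    intro a b ha hb
    have h := ih a b ha hb
    have h2 : a * ((n + 1 : ℝ) * a * b ^ n) ≤ a * (a ^ (n + 1) + (n : ℝ) * b ^ (n + 1)) :=
      mul_le_mul_of_nonneg_left h ha
    have h3 : 0 ≤ (n + 1 : ℝ) * b ^ n * (a - b) ^ 2 := by positivity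
    push_cast
    simp only [pow_succ] at *
    nlinarith [h2, h3]

/-- Tangent line inequality for even powers: `y^k + k y^(k-1)(x-y) ≤ x^k`. -/
lemma tangent_even (k : ℕ) (hk1 : 1 ≤ k) (hke : Even k) (x y : ℝ) :
    y ^ k + (k : ℝ) * y ^ (k - 1) * (x - y) ≤ x ^ k := by
  obtain ⟨j, rfl⟩ : ∃ j, k = j + 1 := ⟨k - 1, by omega⟩
  have hred : (j + 1 : ℕ) - 1 = j := rfl
  rw [hred]
  have h := amgm_aux j |x| |y| (abs_nonneg x) (abs_nonneg y)
  have hxk : |x| ^ (j + 1) = x ^ (j + 1) := Even.pow_abs hke x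
  have hyk : |y| ^ (j + 1) = y ^ (j + 1) := Even.pow_abs hke y
  have hxy : (j + 1 : ℝ) * (y ^ j * x) ≤ (j + 1 : ℝ) * (|x| * |y| ^ j) := by
    have : y ^ j * x ≤ |x| * |y| ^ j := by
      calc y ^ j * x ≤ |y ^ j * x| := le_abs_self _
      _ = |x| * |y| ^ j := by rw [abs_mul, abs_pow, mul_comm]
    have hjp : (0:ℝ) ≤ (j + 1 : ℝ) := by positivity
    exact mul_le_mul_of_nonneg_left this hjp
  have hyy : y ^ (j+1) = y ^ j * y := pow_succ y j
  have hyabs : |y| ^ (j+1) = |y| ^ j * |y| := pow_succ |y| j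
  push_cast at h ⊢
  nlinarith [h, hxy, hxk, hyk]


/-- `0 ≤ y^(n+1) - x^(n+1) - (n+1) x^n (y-x)` and second-order upper bound, for `0 ≤ x,y ≤ β`. -/
lemma pow_second_order (n : ℕ) : ∀ x y β : ℝ, 0 ≤ x → 0 ≤ y → x ≤ β → y ≤ β →
    0 ≤ y ^ (n+1) - x ^ (n+1) - (n+1 : ℝ) * x ^ n * (y - x) ∧
    y ^ (n+1) - x ^ (n+1) - (n+1 : ℝ) * x ^ n * (y - x) ≤
      ((n+1 : ℝ) * n / 2) * β ^ (n-1) * (y - x) ^ 2 := by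
  induction n with
  | zero => intro x y β hx hy hxb hyb; norm_num
  | succ n ih =>
    intro x y β hx hy hxb hyb
    obtain ⟨ih0, ih1⟩ := ih x y β hx hy hxb hyb
    have hb : 0 ≤ β := le_trans hx hxb
    have hiden : y ^ (n+1+1) - x ^ (n+1+1) - ((n:ℝ)+1+1) * x ^ (n+1) * (y - x)
        = y * (y ^ (n+1) - x ^ (n+1) - (n+1 : ℝ) * x ^ n * (y - x))
          + (n+1 : ℝ) * x ^ n * (y - x) ^ 2 := by
      simp only [pow_succ]; ring
    constructor
    · push_cast
      rw [hiden]
      have : 0 ≤ (n+1 : ℝ) * x ^ n * (y - x) ^ 2 := by positivity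
      nlinarith [mul_nonneg hy ih0]
    · push_cast
      rw [hiden]
      have hyD : y * (y ^ (n+1) - x ^ (n+1) - (n+1 : ℝ) * x ^ n * (y - x))
          ≤ β * (((n+1 : ℝ) * n / 2) * β ^ (n-1) * (y - x) ^ 2) := by
        calc y * (y ^ (n+1) - x ^ (n+1) - (n+1 : ℝ) * x ^ n * (y - x))
            ≤ β * (y ^ (n+1) - x ^ (n+1) - (n+1 : ℝ) * x ^ n * (y - x)) :=
              mul_le_mul_of_nonneg_right hyb ih0
          _ ≤ β * (((n+1 : ℝ) * n / 2) * β ^ (n-1) * (y - x) ^ 2) :=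
              mul_le_mul_of_nonneg_left ih1 hb
      have hxn : (n+1 : ℝ) * x ^ n * (y - x) ^ 2 ≤ (n+1 : ℝ) * β ^ n * (y - x) ^ 2 := by
        have h1 := pow_le_pow_left₀ hx hxb n
        have h2 : x ^ n * (y - x) ^ 2 ≤ β ^ n * (y - x) ^ 2 :=
          mul_le_mul_of_nonneg_right h1 (sq_nonneg _)
        have h3 : (0:ℝ) ≤ (n+1 : ℝ) := by positivity
        calc (n+1 : ℝ) * x ^ n * (y - x) ^ 2 = (n+1 : ℝ) * (x ^ n * (y - x) ^ 2) := by ring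
          _ ≤ (n+1 : ℝ) * (β ^ n * (y - x) ^ 2) := mul_le_mul_of_nonneg_left h2 h3
          _ = (n+1 : ℝ) * β ^ n * (y - x) ^ 2 := by ring
      have hbb : β * (((n+1 : ℝ) * n / 2) * β ^ (n-1) * (y - x) ^ 2)
          ≤ ((n+1 : ℝ) * n / 2) * β ^ n * (y - x) ^ 2 := by
        rcases Nat.eq_zero_or_pos n with h0 | h1
        · subst h0; norm_num
        · have : β * β ^ (n-1) = β ^ n := by
            rw [← pow_succ']; congr 1; omega
          calc β * (((n+1 : ℝ) * n / 2) * β ^ (n-1) * (y - x) ^ 2)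
              = ((n+1 : ℝ) * n / 2) * (β * β ^ (n-1)) * (y - x) ^ 2 := by ring
            _ ≤ ((n+1 : ℝ) * n / 2) * β ^ n * (y - x) ^ 2 := by rw [this]
      have hfin : ((n+1 : ℝ) * n / 2) * β ^ n * (y - x) ^ 2 + (n+1 : ℝ) * β ^ n * (y - x) ^ 2
          = ((n+2 : ℝ) * (n+1) / 2) * β ^ n * (y - x) ^ 2 := by ring
      push_cast at hyD hxn hbb hfin ⊢
      linarith [hyD, hxn, hbb]

/-- difference of powers bound: `B^(n+1) - s^(n+1) ≤ (n+1) B^n (B - s)` for `0 ≤ s ≤ B`. -/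
lemma pow_sub_le (n : ℕ) : ∀ s B : ℝ, 0 ≤ s → s ≤ B →
    B ^ (n+1) - s ^ (n+1) ≤ (n+1 : ℝ) * B ^ n * (B - s) := by
  induction n with
  | zero => intro s B hs hsB; norm_num
  | succ n ih =>
    intro s B hs hsB
    have hB : 0 ≤ B := le_trans hs hsB
    have h := ih s B hs hsB
    have hsn : s ^ (n+1) ≤ B ^ (n+1) := pow_le_pow_left₀ hs hsB (n+1)
    have h2 : B * (B ^ (n+1) - s ^ (n+1)) ≤ B * ((n+1 : ℝ) * B ^ n * (B - s)) :=
      mul_le_mul_of_nonneg_left h hB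
    have hiden : B ^ (n+2) - s ^ (n+2)
        = B * (B ^ (n+1) - s ^ (n+1)) + s ^ (n+1) * (B - s) := by
      simp only [pow_succ]; ring
    push_cast
    simp only [pow_succ] at *
    nlinarith [h2, mul_le_mul_of_nonneg_right hsn (by linarith : (0:ℝ) ≤ B - s)]

/-- Bernoulli-type: `(1+x)^n ≤ 100/79` when `n x ≤ 21/100`. -/
lemma bern_bound (n : ℕ) (x : ℝ) (hx : 0 ≤ x) (hxn : (n : ℝ) * x ≤ 21/100) :
    (1 + x) ^ n ≤ 100/79 := by
  rcases Nat.eq_zero_or_pos n with h0 | h1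
  · subst h0; norm_num
  · have hx1 : x ≤ 21/100 := by
      have : (1 : ℝ) ≤ (n : ℝ) := by exact_mod_cast h1
      nlinarith
    have hlow : (79:ℝ)/100 ≤ (1 - x) ^ n := by
      have := one_add_mul_le_pow (a := -x) (by linarith) n
      simp only [mul_neg, ← sub_eq_add_neg] at this
      linarith
    have hprod : (1 + x) ^ n * (1 - x) ^ n ≤ 1 := by
      rw [← mul_pow]
      have h1x : (1 + x) * (1 - x) = 1 - x ^ 2 := by ring
      rw [h1x]
      apply pow_le_one₀ <;> nlinarith
    have hpos : (0:ℝ) < (1 - x) ^ n := by positivity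
    have h2 : (1 + x) ^ n ≤ 1 / (1 - x) ^ n := by
      rw [le_div_iff₀ hpos]; exact hprod
    calc (1 + x) ^ n ≤ 1 / (1 - x) ^ n := h2
      _ ≤ 100/79 := by
        rw [div_le_iff₀ hpos]
        nlinarith [hlow]

/-- PL-type inequality (★). -/
lemma star_ineq (j : ℕ) (A B : ℝ) (hs : A ^ 2 ≤ B) (hB : 0 < B) :
    A ^ (2*j) * (B ^ (j+1) - 2 * A ^ (j+1) + 1)
      ≤ (j+1 : ℝ) * (B ^ (2*j+1) - 2 * A ^ (j+1) * B ^ j + A ^ (2*j)) := by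
  set u := B ^ j with hu
  set c := A ^ (2*j) with hc
  set s := A ^ 2 with hsdef
  set x := B ^ (j+1) with hxdef
  set y := A ^ (j+1) with hydef
  have hs0 : 0 ≤ s := sq_nonneg A
  have hup : 0 < u := pow_pos hB j
  have hxp : 0 < x := pow_pos hB (j+1)
  have hcp : 0 ≤ c := by
    rw [hc, mul_comm 2 j, pow_mul]; positivity
  have hx : x = B * u := by rw [hxdef, hu, pow_succ]; ring
  have hy2 : y ^ 2 = s * c := by
    rw [hydef, hsdef, hc, ← pow_mul, show (j+1)*2 = 2 + 2*j by ring, pow_add]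
  have hcu : c ≤ u := by
    rw [hc, hu]
    calc A ^ (2*j) = (A ^ 2) ^ j := by rw [← pow_mul]
      _ ≤ B ^ j := pow_le_pow_left₀ (sq_nonneg A) hs j
  have hy2s : y ^ 2 = s ^ (j+1) := by
    rw [hydef, hsdef, ← pow_mul, ← pow_mul, show (j+1)*2 = 2*(j+1) by ring]
  have hf1 : x - y ^ 2 ≤ (j+1 : ℝ) * u * (B - s) := by
    rw [hy2s, hxdef, hu]
    exact pow_sub_le j s B hs0 hs
  -- identity for RHS inner times B
  have hRid : B * (B ^ (2*j+1) - 2 * y * u + c) = c * (B - s) + (x - y) ^ 2 := by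
    have hB2 : B ^ (2*j+1) = B * u ^ 2 := by rw [hu, ← pow_mul]; ring
    rw [hB2, hx]
    linear_combination hy2
  -- identity for LHS inner times x
  have hLid : x * (x - 2 * y + 1) = (x - y ^ 2) + (x - y) ^ 2 := by ring
  -- suffices multiplied by x * B > 0
  have hxB : 0 < x * B := mul_pos hxp hB
  rw [← mul_le_mul_iff_of_pos_right hxB]
  have hgoal : c * (x - 2*y + 1) * (x * B) = c * B * (x * (x - 2*y+1)) := by ring
  have hgoal2 : (j+1 : ℝ) * (B ^ (2*j+1) - 2 * y * u + c) * (x * B)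
      = (j+1 : ℝ) * x * (B * (B ^ (2*j+1) - 2 * y * u + c)) := by ring
  rw [hgoal, hgoal2, hLid, hRid]
  -- piece 1 : c*B*(x - y^2) ≤ (j+1)*x*(c*(B-s))
  have hp1 : c * B * (x - y ^ 2) ≤ (j+1 : ℝ) * x * (c * (B - s)) := by
    have h1 : B * (x - y ^ 2) ≤ B * ((j+1 : ℝ) * u * (B - s)) :=
      mul_le_mul_of_nonneg_left hf1 hB.le
    have h2 : c * (B * (x - y ^ 2)) ≤ c * (B * ((j+1 : ℝ) * u * (B - s))) :=
      mul_le_mul_of_nonneg_left h1 hcp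
    calc c * B * (x - y ^ 2) = c * (B * (x - y ^ 2)) := by ring
      _ ≤ c * (B * ((j+1 : ℝ) * u * (B - s))) := h2
      _ = (j+1 : ℝ) * (B * u) * (c * (B - s)) := by ring
      _ = (j+1 : ℝ) * x * (c * (B - s)) := by rw [← hx]
  -- piece 2 : c*B*(x-y)^2 ≤ (j+1)*x*(x-y)^2
  have hp2 : c * B * (x - y) ^ 2 ≤ (j+1 : ℝ) * x * (x - y) ^ 2 := by
    have hcBx : c * B ≤ (j+1 : ℝ) * x := by
      have h1 : c * B ≤ u * B := mul_le_mul_of_nonneg_right hcu hB.le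
      have h2 : (1:ℝ) ≤ (j+1:ℝ) := by push_cast; linarith [Nat.cast_nonneg (α := ℝ) j]
      nlinarith [hxp]
    exact mul_le_mul_of_nonneg_right hcBx (sq_nonneg _)
  nlinarith [hp1, hp2]

set_option maxHeartbeats 2000000 in
lemma step_lemma (d k κ : ℕ) (hk2 : k = 2*κ) (hκ1 : 1 ≤ κ)
    (p : Fin d → ℝ) (hp : ∀ j, 0 < p j) (hp1 : ∑ j, p j = 1)
    (m : ℝ) (hm : (∑ j, (p j)^2) = m^2) (hm0 : 0 < m) (hm1 : m ≤ 1)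
    (pmin : ℝ) (hpmin0 : 0 < pmin) (hpminle : ∀ j, pmin ≤ p j)
    (η : ℝ) (hη0 : 0 < η) (hηm : η * (10*(k:ℝ)^2*m) ≤ 1)
    (a : ℝ) (ha : 0 ≤ a) (hak : 0 < a^k)
    (v v' : Fin d → ℝ) (A B : ℝ)
    (hA : A = ∑ j, p j * v j) (hB : B = ∑ j, p j * (v j)^2)
    (hv' : ∀ j, v' j = v j - η * ((k:ℝ) * p j * (B^(k-1) * v j - A^(k-1))))
    (hinv : B^k + a^k ≤ 2*A^k) :
    (1/2)*((∑ j, p j * (v' j)^2)^k - 2*(∑ j, p j * v' j)^k + 1)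
      ≤ (1 - η*(k:ℝ)*pmin*a^(2*k-2)/8) * ((1/2)*(B^k - 2*A^k + 1)) := by
  have hk1 : 1 ≤ k := by omega
  have hk4 : 2 ≤ k := by omega
  have hke : Even k := ⟨κ, by omega⟩
  have hkr0 : (0:ℝ) < (k:ℝ) := by exact_mod_cast Nat.pos_of_ne_zero (by omega)
  have hkr2 : (2:ℝ) ≤ (k:ℝ) := by exact_mod_cast hk4
  have hkc : (k:ℝ) = 2*(κ:ℝ) := by exact_mod_cast hk2
  have hκr1 : (1:ℝ) ≤ (κ:ℝ) := by exact_mod_cast hκ1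
  have hκr0 : (0:ℝ) < (κ:ℝ) := by linarith
  obtain ⟨g, hg⟩ : ∃ g : Fin d → ℝ, ∀ i, g i = B^(k-1) * v i - A^(k-1) :=
    ⟨_, fun i => rfl⟩
  have hv2 : ∀ i, v' i = v i - η * ((k:ℝ) * p i * g i) := by
    intro i; rw [hv' i, ← hg i]
  set A' : ℝ := ∑ j, p j * v' j with hA'def
  set B' : ℝ := ∑ j, p j * (v' j)^2 with hB'def
  set T1 : ℝ := ∑ i, (p i)^2 * (g i)^2 with hT1def
  set T2 : ℝ := ∑ i, (p i)^2 * (v i * g i) with hT2def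
  set T3 : ℝ := ∑ i, (p i)^2 * g i with hT3def
  set T4 : ℝ := ∑ i, (p i)^3 * (g i)^2 with hT4def
  set Q : ℝ := ∑ i, p i * (g i)^2 with hQdef
  -- sum identities
  have hA'e : A' = A - η*(k:ℝ)*T3 := by
    have hpt : ∀ i : Fin d, p i * v' i = p i * v i - η*(k:ℝ)*((p i)^2 * g i) := by
      intro i; rw [hv2 i]; ring
    rw [hA'def, Finset.sum_congr rfl fun i _ => hpt i, Finset.sum_sub_distrib,
      ← Finset.mul_sum, ← hA, ← hT3def]
  have hB'e : B' = B - 2*(η*(k:ℝ))*T2 + (η*(k:ℝ))^2*T4 := by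
    have hpt : ∀ i : Fin d, p i * (v' i)^2
        = (p i * (v i)^2 - 2*(η*(k:ℝ))*((p i)^2 * (v i * g i)))
          + (η*(k:ℝ))^2*((p i)^3 * (g i)^2) := by
      intro i; rw [hv2 i]; ring
    rw [hB'def, Finset.sum_congr rfl fun i _ => hpt i, Finset.sum_add_distrib,
      Finset.sum_sub_distrib, ← Finset.mul_sum, ← Finset.mul_sum, ← hB, ← hT2def, ← hT4def]
  have hT1e : T1 = B^(k-1)*T2 - A^(k-1)*T3 := by
    have hpt : ∀ i : Fin d, (p i)^2 * (g i)^2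
        = B^(k-1)*((p i)^2 * (v i * g i)) - A^(k-1)*((p i)^2 * g i) := by
      intro i; rw [hg i]; ring
    rw [hT1def, Finset.sum_congr rfl fun i _ => hpt i, Finset.sum_sub_distrib,
      ← Finset.mul_sum, ← Finset.mul_sum, ← hT2def, ← hT3def]
  have hQe : Q = (B^(k-1))^2*B - 2*(B^(k-1)*A^(k-1))*A + (A^(k-1))^2 := by
    have hpt : ∀ i : Fin d, p i * (g i)^2
        = (((B^(k-1))^2*(p i * (v i)^2) - 2*(B^(k-1)*A^(k-1))*(p i * v i))
          + (A^(k-1))^2 * p i) := by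
      intro i; rw [hg i]; ring
    rw [hQdef, Finset.sum_congr rfl fun i _ => hpt i, Finset.sum_add_distrib,
      Finset.sum_sub_distrib, ← Finset.mul_sum, ← Finset.mul_sum, ← Finset.mul_sum,
      ← hA, ← hB, hp1, mul_one]
  -- basic positivity
  have hpn : ∀ i : Fin d, 0 ≤ p i := fun i => (hp i).le
  have hT1n : 0 ≤ T1 :=
    Finset.sum_nonneg fun i _ => mul_nonneg (sq_nonneg _) (sq_nonneg _)
  have hT4n : 0 ≤ T4 :=
    Finset.sum_nonneg fun i _ => mul_nonneg (pow_nonneg (hp i).le 3) (sq_nonneg _)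
  have hQn : 0 ≤ Q :=
    Finset.sum_nonneg fun i _ => mul_nonneg (hp i).le (sq_nonneg _)
  have hBn : 0 ≤ B := by
    rw [hB]; exact Finset.sum_nonneg fun i _ => mul_nonneg (hp i).le (sq_nonneg _)
  have hB'n : 0 ≤ B' := by
    rw [hB'def]; exact Finset.sum_nonneg fun i _ => mul_nonneg (hp i).le (sq_nonneg _)
  -- Cauchy-Schwarz : A^2 ≤ B
  have hCS1 : A^2 ≤ B := by
    have hcs := Finset.sum_mul_sq_le_sq_mul_sq Finset.univ
      (fun i => Real.sqrt (p i)) (fun i => Real.sqrt (p i) * v i)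
    have e1 : ∀ i : Fin d, Real.sqrt (p i) * (Real.sqrt (p i) * v i) = p i * v i := by
      intro i; rw [← mul_assoc, Real.mul_self_sqrt (hpn i)]
    have e2 : ∀ i : Fin d, (Real.sqrt (p i))^2 = p i := fun i => Real.sq_sqrt (hpn i)
    have e3 : ∀ i : Fin d, (Real.sqrt (p i) * v i)^2 = p i * (v i)^2 := by
      intro i; rw [mul_pow, Real.sq_sqrt (hpn i)]
    rw [Finset.sum_congr rfl fun i _ => e1 i, Finset.sum_congr rfl fun i _ => e2 i,
      Finset.sum_congr rfl fun i _ => e3 i, hp1, one_mul, ← hA, ← hB] at hcs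
    exact hcs
  -- Cauchy-Schwarz : T2^2 ≤ T4 * B
  have hCS2 : T2^2 ≤ T4 * B := by
    have hcs := Finset.sum_mul_sq_le_sq_mul_sq Finset.univ
      (fun i => p i * Real.sqrt (p i) * g i) (fun i => Real.sqrt (p i) * v i)
    have e1 : ∀ i : Fin d, (p i * Real.sqrt (p i) * g i) * (Real.sqrt (p i) * v i)
        = (p i)^2 * (v i * g i) := by
      intro i
      have hss : Real.sqrt (p i) * Real.sqrt (p i) = p i := Real.mul_self_sqrt (hpn i)
      calc (p i * Real.sqrt (p i) * g i) * (Real.sqrt (p i) * v i)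
          = p i * (Real.sqrt (p i) * Real.sqrt (p i)) * (v i * g i) := by ring
        _ = (p i)^2 * (v i * g i) := by rw [hss]; ring
    have e2 : ∀ i : Fin d, (p i * Real.sqrt (p i) * g i)^2 = (p i)^3 * (g i)^2 := by
      intro i
      have h2 : (Real.sqrt (p i))^2 = p i := Real.sq_sqrt (hpn i)
      rw [mul_pow, mul_pow, h2]; ring
    have e3 : ∀ i : Fin d, (Real.sqrt (p i) * v i)^2 = p i * (v i)^2 := by
      intro i; rw [mul_pow, Real.sq_sqrt (hpn i)]
    rw [Finset.sum_congr rfl fun i _ => e1 i, Finset.sum_congr rfl fun i _ => e2 i,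
      Finset.sum_congr rfl fun i _ => e3 i, ← hB, ← hT2def, ← hT4def] at hcs
    exact hcs
  -- invariant consequences
  have hakn : 0 ≤ a^k := pow_nonneg ha k
  have hBkn : 0 ≤ B^k := pow_nonneg hBn k
  have hBk2A : B^k ≤ 2*A^k := by linarith only [hinv, hakn]
  have hAk0 : 0 < A^k := by linarith only [hinv, hak, hBkn]
  have hAne : A ≠ 0 := by
    intro h; rw [h, zero_pow (by omega : k ≠ 0)] at hAk0; exact lt_irrefl 0 hAk0
  have hA2pos : 0 < A^2 := by positivity
  have hB0 : 0 < B := lt_of_lt_of_le hA2pos hCS1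
  have hBκpos : 0 < B^κ := pow_pos hB0 κ
  have hBkκ : B^k = (B^κ)^2 := by
    rw [← pow_mul, show κ*2 = k by omega]
  have hAkκ : A^k = (A^2)^κ := by
    rw [← pow_mul, show 2*κ = k by omega]
  have hAkBκ : A^k ≤ B^κ := by
    rw [hAkκ]; exact pow_le_pow_left₀ (sq_nonneg A) hCS1 κ
  have hBκ2 : B^κ ≤ 2 := by
    have h1 : (B^κ)^2 ≤ 2*(B^κ) := by rw [← hBkκ]; linarith only [hBk2A, hAkBκ]
    nlinarith only [h1, hBκpos]
  have hBk4 : B^k ≤ 4 := by nlinarith only [hBkκ, hBκ2, hBκpos]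
  have hB2 : B ≤ 2 := by
    rcases le_or_gt B 1 with h | h
    · linarith
    · calc B ≤ B^κ := le_self_pow₀ h.le (by omega)
        _ ≤ 2 := hBκ2
  have hB1n : (0:ℝ) ≤ B^(k-1) := pow_nonneg hBn _
  have hB1_4 : B^(k-1) ≤ 4 := by
    rcases le_or_gt B 1 with h | h
    · have := pow_le_one₀ hBn h (n := k-1); linarith only [this]
    · calc B^(k-1) ≤ B^k := pow_le_pow_right₀ h.le (by omega)
        _ ≤ 4 := hBk4
  have hB1B : B^(k-1) * B = B^k := by rw [← pow_succ]; congr 1; omega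
  have hA1A : A^(k-1) * A = A^k := by rw [← pow_succ]; congr 1; omega
  have hA12 : (A^(k-1))^2 = (A^2)^(k-1) := by
    rw [← pow_mul, ← pow_mul]; congr 1; omega
  have hA12B1 : (A^(k-1))^2 ≤ B^(k-1) := by
    rw [hA12]; exact pow_le_pow_left₀ (sq_nonneg A) hCS1 _
  have hQA1 : Q ≤ (A^(k-1))^2 := by
    have h1 : (B^(k-1))^2*B = B^(k-1) * B^k := by rw [← hB1B]; ring
    have h2 : B^(k-1)*A^(k-1)*A = B^(k-1)*A^k := by rw [← hA1A]; ring
    have h3 : B^(k-1)*B^k ≤ B^(k-1)*(2*A^k) :=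
      mul_le_mul_of_nonneg_left hBk2A hB1n
    linarith only [hQe, h1, h2, h3]
  have hQB1 : Q ≤ B^(k-1) := le_trans hQA1 hA12B1
  have hQ4 : Q ≤ 4 := le_trans hQB1 hB1_4
  have hQB4 : Q * B ≤ 4 := by
    calc Q * B ≤ B^(k-1) * B := mul_le_mul_of_nonneg_right hQB1 hBn
      _ = B^k := hB1B
      _ ≤ 4 := hBk4
  -- p bounds
  have hpm : ∀ i : Fin d, p i ≤ m := by
    intro i
    have h1 : (p i)^2 ≤ m^2 := by
      rw [← hm]
      exact Finset.single_le_sum (f := fun i => (p i)^2)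
        (fun i _ => sq_nonneg _) (Finset.mem_univ i)
    exact le_of_pow_le_pow_left₀ two_ne_zero hm0.le h1
  have hpm2 : ∀ i : Fin d, (p i)^2 ≤ m^2 := by
    intro i; rw [← hm]
    exact Finset.single_le_sum (f := fun i => (p i)^2)
      (fun i _ => sq_nonneg _) (Finset.mem_univ i)
  have hT4T1 : T4 ≤ m * T1 := by
    rw [hT4def, hT1def, Finset.mul_sum]
    apply Finset.sum_le_sum
    intro i _
    have h1 : p i * ((p i)^2 * (g i)^2) ≤ m * ((p i)^2 * (g i)^2) :=
      mul_le_mul_of_nonneg_right (hpm i) (mul_nonneg (sq_nonneg _) (sq_nonneg _))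
    calc (p i)^3 * (g i)^2 = p i * ((p i)^2 * (g i)^2) := by ring
      _ ≤ m * ((p i)^2 * (g i)^2) := h1
  have hT4Q : T4 ≤ m^2 * Q := by
    rw [hT4def, hQdef, Finset.mul_sum]
    apply Finset.sum_le_sum
    intro i _
    have h1 : (p i)^2 * (p i * (g i)^2) ≤ m^2 * (p i * (g i)^2) :=
      mul_le_mul_of_nonneg_right (hpm2 i) (mul_nonneg (hp i).le (sq_nonneg _))
    calc (p i)^3 * (g i)^2 = (p i)^2 * (p i * (g i)^2) := by ring
      _ ≤ m^2 * (p i * (g i)^2) := h1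
  have hT1Q : pmin * Q ≤ T1 := by
    rw [hT1def, hQdef, Finset.mul_sum]
    apply Finset.sum_le_sum
    intro i _
    have h1 : pmin * (p i * (g i)^2) ≤ p i * (p i * (g i)^2) :=
      mul_le_mul_of_nonneg_right (hpminle i) (mul_nonneg (hp i).le (sq_nonneg _))
    calc pmin * (p i * (g i)^2) ≤ p i * (p i * (g i)^2) := h1
      _ = (p i)^2 * (g i)^2 := by ring
  have hT4m2 : T4 ≤ 4*m^2 := by nlinarith only [hT4Q, hQ4, sq_nonneg m]
  have hT2sq4 : T2^2 ≤ 4*m^2 := by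
    have h1 : T4 * B ≤ m^2 * (Q*B) := by
      calc T4 * B ≤ (m^2*Q) * B := mul_le_mul_of_nonneg_right hT4Q hBn
        _ = m^2 * (Q*B) := by ring
    nlinarith only [hCS2, hQB4, sq_nonneg m, h1]
  have hT2ub : T2 ≤ 2*m := by nlinarith only [hT2sq4, hm0]
  have hT2lb : -(2*m) ≤ T2 := by nlinarith only [hT2sq4, hm0]
  -- eta bounds
  have hηkm : η*(k:ℝ)*m ≤ 1/(10*(k:ℝ)) := by
    rw [le_div_iff₀ (by positivity)]
    calc η*(k:ℝ)*m*(10*(k:ℝ)) = η*(10*(k:ℝ)^2*m) := by ring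
      _ ≤ 1 := hηm
  have hηm2 : η*m ≤ 1/(10*(k:ℝ)^2) := by
    rw [le_div_iff₀ (by positivity)]
    calc η*m*(10*(k:ℝ)^2) = η*(10*(k:ℝ)^2*m) := by ring
      _ ≤ 1 := hηm
  have hkne : (k:ℝ) ≠ 0 := ne_of_gt hkr0
  have hcast1 : ((k-1:ℕ):ℝ) + 1 = (k:ℝ) := by
    rw [Nat.cast_sub hk1]; push_cast; ring
  have hcast2 : ((k-1:ℕ):ℝ) = (k:ℝ) - 1 := by
    rw [Nat.cast_sub hk1]; push_cast; ring
  -- second order bound for B-part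
  set β : ℝ := max B B' with hβdef
  have hβB : B ≤ β := le_max_left _ _
  have hβB' : B' ≤ β := le_max_right _ _
  have hβn : 0 ≤ β := le_trans hBn hβB
  have hβ2n : 0 ≤ β^(k-2) := pow_nonneg hβn _
  have hso := (pow_second_order (k-1) B B' β hBn hB'n hβB hβB').2
  rw [show k-1+1 = k from by omega, show k-1-1 = k-2 from by omega,
    hcast2] at hso
  have htan := tangent_even k hk1 hke A' A
  -- first order identity
  have hΔA : A' - A = -(η*(k:ℝ)*T3) := by rw [hA'e]; ring
  have hΔB : B' - B = -(2*(η*(k:ℝ))*T2) + (η*(k:ℝ))^2*T4 := by rw [hB'e]; ring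
  have hfo : (k:ℝ)/2*B^(k-1)*(B'-B) - (k:ℝ)*A^(k-1)*(A'-A)
      = -(η*(k:ℝ)^2*T1) + (k:ℝ)/2*B^(k-1)*((η*(k:ℝ))^2*T4) := by
    rw [hΔA, hΔB, hT1e]; ring
  have hdescent : (1/2)*(B'^k - 2*A'^k + 1) ≤ (1/2)*(B^k - 2*A^k + 1)
      - η*(k:ℝ)^2*T1 + (k:ℝ)/2*B^(k-1)*((η*(k:ℝ))^2*T4)
      + ((k:ℝ)*((k:ℝ)-1)/2)*β^(k-2)*(B'-B)^2/2 := by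
    nlinarith only [htan, hso, hfo]
  set X : ℝ := η*(k:ℝ)^2*T1 with hXdef
  have hX : 0 ≤ X := by positivity
  -- mid term bound
  have he20 : (1/(10*(k:ℝ)))*4/2 = (1/(5*(k:ℝ))) := by field_simp; ring
  have hmid : (k:ℝ)/2*B^(k-1)*((η*(k:ℝ))^2*T4) ≤ X*(1/(5*(k:ℝ))) := by
    have h1 : (η*(k:ℝ))^2*T4 ≤ (η*(k:ℝ))^2*(m*T1) :=
      mul_le_mul_of_nonneg_left hT4T1 (by positivity)
    have h2 : (k:ℝ)/2*B^(k-1)*((η*(k:ℝ))^2*T4)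
        ≤ (k:ℝ)/2*B^(k-1)*((η*(k:ℝ))^2*(m*T1)) := by
      apply mul_le_mul_of_nonneg_left h1 (by positivity)
    have h3 : η*(k:ℝ)*m*B^(k-1) ≤ (1/(10*(k:ℝ)))*4 :=
      mul_le_mul hηkm hB1_4 hB1n (by positivity)
    have h4 : X*((η*(k:ℝ)*m*B^(k-1))/2) ≤ X*((1/(10*(k:ℝ)))*4/2) := by
      apply mul_le_mul_of_nonneg_left _ hX; linarith only [h3]
    calc (k:ℝ)/2*B^(k-1)*((η*(k:ℝ))^2*T4)
        ≤ (k:ℝ)/2*B^(k-1)*((η*(k:ℝ))^2*(m*T1)) := h2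
      _ = X*((η*(k:ℝ)*m*B^(k-1))/2) := by rw [hXdef]; ring
      _ ≤ X*((1/(10*(k:ℝ)))*4/2) := h4
      _ = X*(1/(5*(k:ℝ))) := by rw [he20]
  -- remainder term bound
  set CB : ℝ := 4*B + 4/(5*(k:ℝ)) + 1/(25*(k:ℝ)^2) with hCBdef
  have hCBn : 0 ≤ CB := by
    have h1 : (0:ℝ) ≤ 4/(5*(k:ℝ)) := by positivity
    have h2 : (0:ℝ) ≤ 1/(25*(k:ℝ)^2) := by positivity
    rw [hCBdef]; linarith only [hBn, h1, h2]
  have hmT1n : 0 ≤ m*T1 := mul_nonneg hm0.le hT1n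
  have hSS : (η*(k:ℝ)*T4 - 2*T2)^2 ≤ m*T1*CB := by
    have hc1 : (2*T2)^2 ≤ 4*B*(m*T1) := by
      have hT4B : T4*B ≤ (m*T1)*B := mul_le_mul_of_nonneg_right hT4T1 hBn
      nlinarith only [hCS2, hT4B]
    have hxnn : 0 ≤ η*(k:ℝ)*T4 := by positivity
    have hc2 : -(2*(η*(k:ℝ)*T4)*(2*T2)) ≤ 4/(5*(k:ℝ))*(m*T1) := by
      have h1 : -(2*(η*(k:ℝ)*T4)*(2*T2)) = 4*(η*(k:ℝ)*T4)*(-T2) := by ring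
      have h2 : 4*(η*(k:ℝ)*T4)*(-T2) ≤ 4*(η*(k:ℝ)*T4)*(2*m) := by
        apply mul_le_mul_of_nonneg_left _ (by positivity)
        linarith only [hT2lb]
      have h3 : 4*(η*(k:ℝ)*T4)*(2*m) = 8*(η*(k:ℝ)*m)*T4 := by ring
      have h4 : 8*(η*(k:ℝ)*m)*T4 ≤ 8*(η*(k:ℝ)*m)*(m*T1) := by
        apply mul_le_mul_of_nonneg_left hT4T1 (by positivity)
      have h5 : 8*(η*(k:ℝ)*m)*(m*T1) ≤ 8*(1/(10*(k:ℝ)))*(m*T1) := by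
        apply mul_le_mul_of_nonneg_right _ hmT1n
        have := hηkm; linarith only [this]
      have h6 : 8*(1/(10*(k:ℝ)))*(m*T1) = 4/(5*(k:ℝ))*(m*T1) := by
        field_simp; ring
      linarith only [h1.le, h2, h3.le, h4, h5, h6.le, h1.ge, h3.ge, h6.ge]
    have hc3 : (η*(k:ℝ)*T4)^2 ≤ 1/(25*(k:ℝ)^2)*(m*T1) := by
      have h1 : η*(k:ℝ)*T4 ≤ η*(k:ℝ)*(4*m^2) := by
        apply mul_le_mul_of_nonneg_left hT4m2 (by positivity)
      have h2 : η*(k:ℝ)*T4 ≤ η*(k:ℝ)*(m*T1) := by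
        apply mul_le_mul_of_nonneg_left hT4T1 (by positivity)
      have h3 : (η*(k:ℝ)*T4)^2 = (η*(k:ℝ)*T4)*(η*(k:ℝ)*T4) := sq (η*(k:ℝ)*T4) ▸ rfl
      have h4 : (η*(k:ℝ)*T4)*(η*(k:ℝ)*T4) ≤ (η*(k:ℝ)*(4*m^2))*(η*(k:ℝ)*(m*T1)) :=
        mul_le_mul h1 h2 hxnn (by positivity)
      have h5 : (η*(k:ℝ)*(4*m^2))*(η*(k:ℝ)*(m*T1)) = 4*(η*(k:ℝ)*m)^2*(m*T1) := by ring
      have h6 : 4*(η*(k:ℝ)*m)^2*(m*T1) ≤ 4*(1/(10*(k:ℝ)))^2*(m*T1) := by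
        apply mul_le_mul_of_nonneg_right _ hmT1n
        have h7 : (η*(k:ℝ)*m)^2 ≤ (1/(10*(k:ℝ)))^2 := by
          apply pow_le_pow_left₀ (by positivity) hηkm
        linarith only [h7]
      have h8 : 4*(1/(10*(k:ℝ)))^2*(m*T1) = 1/(25*(k:ℝ)^2)*(m*T1) := by
        field_simp; ring
      calc (η*(k:ℝ)*T4)^2 = (η*(k:ℝ)*T4)*(η*(k:ℝ)*T4) := by ring
        _ ≤ (η*(k:ℝ)*(4*m^2))*(η*(k:ℝ)*(m*T1)) := h4
        _ = 4*(η*(k:ℝ)*m)^2*(m*T1) := h5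
        _ ≤ 4*(1/(10*(k:ℝ)))^2*(m*T1) := h6
        _ = 1/(25*(k:ℝ)^2)*(m*T1) := h8
    have hexp : (η*(k:ℝ)*T4 - 2*T2)^2
        = (η*(k:ℝ)*T4)^2 - 2*(η*(k:ℝ)*T4)*(2*T2) + (2*T2)^2 := by ring
    rw [hexp, hCBdef]
    linarith only [hc1, hc2, hc3]
  have hΔB2 : (B'-B)^2 = (η*(k:ℝ))^2*(η*(k:ℝ)*T4 - 2*T2)^2 := by
    rw [hΔB]; ring
  have hΔB2b : (B'-B)^2 ≤ (η*(k:ℝ))^2*(m*T1*CB) := by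
    rw [hΔB2]; exact mul_le_mul_of_nonneg_left hSS (by positivity)
  have hηk2m : η*(k:ℝ)^2*m ≤ 1/10 := by
    have h1 : η*m*(k:ℝ)^2 ≤ (1/(10*(k:ℝ)^2))*(k:ℝ)^2 :=
      mul_le_mul_of_nonneg_right hηm2 (by positivity)
    have h2 : (1/(10*(k:ℝ)^2))*(k:ℝ)^2 = 1/10 := by field_simp
    linarith only [h1, h2.le, h2.ge]
  have hR : ((k:ℝ)*((k:ℝ)-1)/2)*β^(k-2)*(B'-B)^2/2 ≤ X*(β^(k-2)*CB/40) := by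
    have hcoef : (0:ℝ) ≤ (k:ℝ)*((k:ℝ)-1)/2/2*β^(k-2) := by
      have : (0:ℝ) ≤ (k:ℝ)-1 := by linarith only [hkr2]
      positivity
    have h1 : ((k:ℝ)*((k:ℝ)-1)/2)*β^(k-2)*(B'-B)^2/2
        ≤ ((k:ℝ)*((k:ℝ)-1)/2)*β^(k-2)*((η*(k:ℝ))^2*(m*T1*CB))/2 := by
      have := mul_le_mul_of_nonneg_left hΔB2b hcoef
      calc ((k:ℝ)*((k:ℝ)-1)/2)*β^(k-2)*(B'-B)^2/2
          = ((k:ℝ)*((k:ℝ)-1)/2/2*β^(k-2))*(B'-B)^2 := by ring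
        _ ≤ ((k:ℝ)*((k:ℝ)-1)/2/2*β^(k-2))*((η*(k:ℝ))^2*(m*T1*CB)) := this
        _ = ((k:ℝ)*((k:ℝ)-1)/2)*β^(k-2)*((η*(k:ℝ))^2*(m*T1*CB))/2 := by ring
    have h2 : ((k:ℝ)*((k:ℝ)-1)/2)*β^(k-2)*((η*(k:ℝ))^2*(m*T1*CB))/2
        ≤ ((k:ℝ)*(k:ℝ)/2)*β^(k-2)*((η*(k:ℝ))^2*(m*T1*CB))/2 := by
      have hkk4 : (k:ℝ)*((k:ℝ)-1)/4 ≤ (k:ℝ)*(k:ℝ)/4 := by nlinarith only [hkr0]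
      have hrest : (0:ℝ) ≤ β^(k-2)*((η*(k:ℝ))^2*(m*T1*CB)) := by
        apply mul_nonneg hβ2n
        apply mul_nonneg (by positivity) (mul_nonneg hmT1n hCBn)
      calc ((k:ℝ)*((k:ℝ)-1)/2)*β^(k-2)*((η*(k:ℝ))^2*(m*T1*CB))/2
          = ((k:ℝ)*((k:ℝ)-1)/4)*(β^(k-2)*((η*(k:ℝ))^2*(m*T1*CB))) := by ring
        _ ≤ ((k:ℝ)*(k:ℝ)/4)*(β^(k-2)*((η*(k:ℝ))^2*(m*T1*CB))) :=
            mul_le_mul_of_nonneg_right hkk4 hrest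
        _ = ((k:ℝ)*(k:ℝ)/2)*β^(k-2)*((η*(k:ℝ))^2*(m*T1*CB))/2 := by ring
    have h3 : ((k:ℝ)*(k:ℝ)/2)*β^(k-2)*((η*(k:ℝ))^2*(m*T1*CB))/2
        = X*((η*(k:ℝ)^2*m/4)*(β^(k-2)*CB)) := by
      rw [hXdef]; ring
    have h4 : X*((η*(k:ℝ)^2*m/4)*(β^(k-2)*CB)) ≤ X*((1/40)*(β^(k-2)*CB)) := by
      apply mul_le_mul_of_nonneg_left _ hX
      apply mul_le_mul_of_nonneg_right _ (mul_nonneg hβ2n hCBn)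
      linarith only [hηk2m]
    have h5 : X*((1/40)*(β^(k-2)*CB)) = X*(β^(k-2)*CB/40) := by ring
    linarith only [h1, h2, h3.le, h3.ge, h4, h5.le, h5.ge]
  have pe : ∀ (x:ℝ) (mm nn : ℕ), mm = nn → x^mm = x^nn := fun x mm nn h => by rw [h]
  -- bound on B' increase
  have hΔBub : B' ≤ B + 21/(100*(κ:ℝ)) := by
    have h1 : -(2*(η*(k:ℝ)))*T2 ≤ 2*(η*(k:ℝ))*(2*m) := by
      have h2 : (2*(η*(k:ℝ)))*(-T2) ≤ (2*(η*(k:ℝ)))*(2*m) := by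
        apply mul_le_mul_of_nonneg_left _ (by positivity)
        linarith only [hT2lb]
      linarith only [h2]
    have h3 : (η*(k:ℝ))^2*T4 ≤ (η*(k:ℝ))^2*(4*m^2) :=
      mul_le_mul_of_nonneg_left hT4m2 (by positivity)
    have h4 : 2*(η*(k:ℝ))*(2*m) = 4*(η*(k:ℝ)*m) := by ring
    have h5 : 4*(η*(k:ℝ)*m) ≤ 4*(1/(10*(k:ℝ))) := by linarith only [hηkm]
    have h6 : (η*(k:ℝ))^2*(4*m^2) = 4*(η*(k:ℝ)*m)^2 := by ring
    have h7 : (η*(k:ℝ)*m)^2 ≤ (1/(10*(k:ℝ)))^2 :=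
      pow_le_pow_left₀ (by positivity) hηkm 2
    -- arithmetic : 4/(10k) + 4/(100 k^2) ≤ 21/(100 κ)
    have e1 : 4*((1:ℝ)/(10*(2*(κ:ℝ)))) = 1/(5*(κ:ℝ)) := by
      field_simp; ring
    have e2 : 4*((1:ℝ)/(10*(2*(κ:ℝ))))^2 = 1/(100*(κ:ℝ)^2) := by
      field_simp; ring
    have e3 : (1:ℝ)/(100*(κ:ℝ)^2) ≤ 1/(100*(κ:ℝ)) := by
      apply one_div_le_one_div_of_le (by positivity)
      nlinarith only [hκr1, hκr0]
    have e4 : (1:ℝ)/(5*(κ:ℝ)) + 1/(100*(κ:ℝ)) = 21/(100*(κ:ℝ)) := by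
      field_simp; ring
    have hkrw : (1:ℝ)/(10*(k:ℝ)) = 1/(10*(2*(κ:ℝ))) := by rw [hkc]
    rw [hB'e]
    rw [hkrw] at h5 h7
    nlinarith only [h1, h3, h4, h5, h6, h7, e1, e2, e3, e4]
  have hβκ : β^κ ≤ 254/100 := by
    rcases le_total B' B with hc | hc
    · have hβeq : β = B := max_eq_left hc
      rw [hβeq]; linarith only [hBκ2]
    · have hβeq : β = B' := max_eq_right hc
      have hβub : β ≤ B + 21/(100*(κ:ℝ)) := by rw [hβeq]; exact hΔBub
      have hxpos : (0:ℝ) ≤ 21/(100*(κ:ℝ)) := by positivity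
      have hbern : (1 + 21/(100*(κ:ℝ)))^κ ≤ 100/79 := by
        apply bern_bound κ _ hxpos
        have : (κ:ℝ)*(21/(100*(κ:ℝ))) = 21/100 := by field_simp
        linarith only [this]
      rcases le_total B 1 with h1 | h1
      · have h2 : β ≤ 1 + 21/(100*(κ:ℝ)) := by linarith only [hβub, h1]
        have h3 : β^κ ≤ (1 + 21/(100*(κ:ℝ)))^κ := pow_le_pow_left₀ hβn h2 κ
        linarith only [h3, hbern]
      · have h2 : β ≤ B*(1 + 21/(100*(κ:ℝ))) := by nlinarith only [hβub, h1, hxpos]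
        have h3 : β^κ ≤ (B*(1 + 21/(100*(κ:ℝ))))^κ := pow_le_pow_left₀ hβn h2 κ
        have h4 : (B*(1 + 21/(100*(κ:ℝ))))^κ = B^κ*(1 + 21/(100*(κ:ℝ)))^κ :=
          mul_pow _ _ _
        have h5 : B^κ*(1 + 21/(100*(κ:ℝ)))^κ ≤ 2*(100/79) := by
          apply mul_le_mul hBκ2 hbern (by positivity) (by norm_num)
        rw [h4] at h3
        linarith only [h3, h5]
  have hNUM : β^(k-2)*CB/40 + 1/(5*(k:ℝ)) ≤ 3/4 := by
    rcases Nat.lt_or_ge κ 2 with hcase | hcase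
    · -- k = 2 case
      have hk2e : k = 2 := by omega
      subst hk2e
      norm_num at hCBdef ⊢
      rw [hCBdef]
      norm_num
      linarith only [hB2]
    · -- k ≥ 4 case
      have hk4' : 4 ≤ k := by omega
      have hkr4 : (4:ℝ) ≤ (k:ℝ) := by exact_mod_cast hk4'
      have h5k : 1/(5*(k:ℝ)) ≤ 1/20 := by
        rw [div_le_div_iff₀ (by positivity) (by norm_num)]
        linarith only [hkr4]
      have hCBub : CB ≤ 4*B + 81/400 := by
        have h1 : 4/(5*(k:ℝ)) ≤ 1/5 := by
          rw [div_le_div_iff₀ (by positivity) (by norm_num)]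
          linarith only [hkr4]
        have h2 : 1/(25*(k:ℝ)^2) ≤ 1/400 := by
          rw [div_le_div_iff₀ (by positivity) (by norm_num)]
          nlinarith only [hkr4]
        rw [hCBdef]; linarith only [h1, h2]
      rcases le_total β 1 with hb1 | hb1
      · have h1 : β^(k-2) ≤ 1 := pow_le_one₀ hβn hb1
        have h2 : CB ≤ 4 + 81/400 := by linarith only [hCBub, hβB, hb1]
        have h3 : β^(k-2)*CB ≤ 1*(4+81/400) := mul_le_mul h1 h2 hCBn (by norm_num)
        linarith only [h3, h5k]
      · have h1 : CB ≤ (1681/400)*β := by linarith only [hCBub, hβB, hb1]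
        have h2 : β^(k-2)*CB ≤ β^(k-2)*((1681/400)*β) :=
          mul_le_mul_of_nonneg_left h1 hβ2n
        have h3 : β^(k-2)*β = β^(k-1) := by rw [← pow_succ]; congr 1; omega
        have h4 : β^(k-1) ≤ β^k := pow_le_pow_right₀ hb1 (by omega)
        have h5 : β^k = (β^κ)^2 :=
          (pe β k (κ*2) (by omega)).trans (pow_mul β κ 2)
        have h6 : (β^κ)^2 ≤ (254/100)^2 :=
          pow_le_pow_left₀ (pow_nonneg hβn κ) hβκ 2
        have h7 : β^(k-2)*((1681/400)*β) = (1681/400)*(β^(k-2)*β) := by ring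
        have h8 : (1681/400:ℝ)*(β^(k-2)*β) ≤ (1681/400)*((254/100)^2) := by
          apply mul_le_mul_of_nonneg_left _ (by norm_num)
          rw [h3]
          calc β^(k-1) ≤ β^k := h4
            _ = (β^κ)^2 := h5
            _ ≤ (254/100)^2 := h6
        have h9 : ((1681:ℝ)/400)*((254/100)^2)/40 + 1/20 ≤ 3/4 := by norm_num
        rw [h7] at h2
        linarith only [h2, h8, h5k, h9]
  have hkey : (1/2)*(B'^k - 2*A'^k + 1) ≤ (1/2)*(B^k - 2*A^k + 1) - (1/4)*X := by
    have h2 : (1/(5*(k:ℝ))) + β^(k-2)*CB/40 ≤ 3/4 := by linarith only [hNUM]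
    have h1 : X*(1/(5*(k:ℝ))) + X*(β^(k-2)*CB/40) ≤ X*(3/4) := by
      calc X*(1/(5*(k:ℝ))) + X*(β^(k-2)*CB/40)
          = X*((1/(5*(k:ℝ))) + β^(k-2)*CB/40) := by ring
        _ ≤ X*(3/4) := mul_le_mul_of_nonneg_left h2 hX
    linarith only [hdescent, hmid, hR, h1]
  -- PL inequality
  have hQe2 : Q = B^(k-1)*B^k - 2*A^k*B^(k-1) + (A^(k-1))^2 := by
    rw [hQe, ← hB1B, ← hA1A]; ring
  have hjs : k - 1 + 1 = k := by omega
  have hstar0 := star_ineq (k-1) A B hCS1 hB0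
  rw [hjs, hcast1] at hstar0
  have eA : A^(2*(k-1)) = (A^(k-1))^2 :=
    (pe A (2*(k-1)) ((k-1)*2) (by omega)).trans (pow_mul A (k-1) 2)
  have eB : B^(2*(k-1)+1) = B^(k-1)*B^k :=
    (pe B (2*(k-1)+1) ((k-1)+k) (by omega)).trans (pow_add B (k-1) k)
  rw [eA, eB, ← hQe2] at hstar0
  have hL2n : 0 ≤ B^k - 2*A^k + 1 := by
    have h1 : (A^k)^2 = (A^2)^k := pow_right_comm A k 2
    have h2 : (A^2)^k ≤ B^k := pow_le_pow_left₀ (sq_nonneg A) hCS1 k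
    nlinarith only [h1, h2, sq_nonneg (A^k - 1)]
  -- a^(2k-2) ≤ 4 (A^(k-1))^2
  have hak2A : a^k ≤ 2*A^k := by linarith only [hinv, hBkn]
  have ha4 : a^(2*k-2) ≤ 4*(A^(k-1))^2 := by
    apply le_of_pow_le_pow_left₀ (show k ≠ 0 by omega) (by positivity)
    have hXk : (a^(2*k-2))^k = (a^k)^(2*k-2) :=
      (pow_mul a (2*k-2) k).symm.trans ((pe a ((2*k-2)*k) (k*(2*k-2)) (by ring)).trans
        (pow_mul a k (2*k-2)))
    have h1 : (a^k)^(2*k-2) ≤ (2*A^k)^(2*k-2) := pow_le_pow_left₀ hakn hak2A _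
    have h2 : (2*A^k)^(2*k-2) = 2^(2*k-2)*(A^k)^(2*k-2) := mul_pow _ _ _
    have h3 : (A^k)^(2*k-2) = ((A^(k-1))^2)^k := by
      rw [← pow_mul, ← pow_mul, ← pow_mul]
      exact pe A (k*(2*k-2)) ((k-1)*(2*k))
        (by rw [show 2*k-2 = 2*(k-1) from by omega]; ring)
    have h4 : (2:ℝ)^(2*k-2) ≤ 2^(2*k) := pow_le_pow_right₀ one_le_two (by omega)
    have h5 : (2:ℝ)^(2*k) = 4^k := by
      rw [pow_mul]; norm_num
    have h6 : (4*(A^(k-1))^2)^k = 4^k*((A^(k-1))^2)^k := mul_pow _ _ _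
    calc (a^(2*k-2))^k = (a^k)^(2*k-2) := hXk
      _ ≤ (2*A^k)^(2*k-2) := h1
      _ = 2^(2*k-2)*((A^(k-1))^2)^k := by rw [h2, h3]
      _ ≤ 2^(2*k)*((A^(k-1))^2)^k := mul_le_mul_of_nonneg_right h4 (by positivity)
      _ = (4*(A^(k-1))^2)^k := by rw [h6, h5]
  -- final assembly
  have hfinal : η*(k:ℝ)*pmin*(a^(2*k-2)*(B^k - 2*A^k + 1))/16 ≤ (1/4)*X := by
    have h3 : a^(2*k-2)*(B^k - 2*A^k+1) ≤ (4*(A^(k-1))^2)*(B^k - 2*A^k+1) :=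
      mul_le_mul_of_nonneg_right ha4 hL2n
    have h4 : a^(2*k-2)*(B^k - 2*A^k+1) ≤ 4*((k:ℝ)*Q) := by
      nlinarith only [h3, hstar0]
    have h5 : (0:ℝ) ≤ η*(k:ℝ)*pmin := by positivity
    have h6 : η*(k:ℝ)*pmin*(a^(2*k-2)*(B^k - 2*A^k + 1))
        ≤ η*(k:ℝ)*pmin*(4*((k:ℝ)*Q)) :=
      mul_le_mul_of_nonneg_left h4 h5
    have h7 : η*(k:ℝ)*pmin*(4*((k:ℝ)*Q)) = 4*(η*(k:ℝ)^2*(pmin*Q)) := by ring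
    have h8 : η*(k:ℝ)^2*(pmin*Q) ≤ η*(k:ℝ)^2*T1 :=
      mul_le_mul_of_nonneg_left hT1Q (by positivity)
    rw [h7] at h6
    rw [hXdef]
    linarith only [h6, h8]
  calc (1/2)*(B'^k - 2*A'^k + 1)
      ≤ (1/2)*(B^k - 2*A^k + 1) - (1/4)*X := hkey
    _ ≤ (1/2)*(B^k - 2*A^k + 1) - η*(k:ℝ)*pmin*(a^(2*k-2)*(B^k - 2*A^k + 1))/16 := by
        linarith only [hfinal]
    _ = (1 - η*(k:ℝ)*pmin*a^(2*k-2)/8) * ((1/2)*(B^k - 2*A^k + 1)) := by ring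


/-- The weighted alignment `A(w) = ∑_j p_j w_j w*_j`. -/
noncomputable def alignA (d : ℕ) (p wstar w : Fin d → ℝ) : ℝ :=
  ∑ j, p j * w j * wstar j

/-- The weighted norm `B(w) = ∑_j p_j w_j²`. -/
noncomputable def normB (d : ℕ) (p w : Fin d → ℝ) : ℝ :=
  ∑ j, p j * (w j) ^ 2

/-- The population loss `L(w) = (1/2)(B(w)^k − 2 A(w)^k + 1)`. -/
noncomputable def popLoss (d k : ℕ) (p wstar w : Fin d → ℝ) : ℝ :=
  (1 / 2) * ((normB d p w) ^ k - 2 * (alignA d p wstar w) ^ k + 1)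

set_option maxHeartbeats 1000000 in
/-- Linear convergence of population gradient descent: for `k` even with `k ≥ 2`,
`p_j > 0`, step size `0 < η ≤ 1/(10 k² ‖p‖₂)`, gradient-descent iterates
`w(t+1) = w(t) − η ∇L(w(t))`, and an initialization with `0 < B(w(0)) ≤ |A(w(0))|`,
the population loss satisfies
`L(w(t)) ≤ (1 − η k p_min A(w(0))^{2k−2}/8)^t · L(w(0))` for all `t`. -/
theorem population_gd_linear_convergence (d k : ℕ) (hd : 0 < d) (hk : 2 ≤ k)
    (hkeven : Even k)
    (p : Fin d → ℝ) (hp : ∀ j, 0 < p j) (hp1 : ∑ j, p j = 1)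
    (pmin : ℝ) (hpmin : IsLeast (Set.range p) pmin)
    (wstar : Fin d → ℝ) (hws : ∀ j, wstar j = 1 ∨ wstar j = -1)
    (η : ℝ) (hη0 : 0 < η)
    (hη : η ≤ 1 / (10 * (k : ℝ) ^ 2 * Real.sqrt (∑ j, (p j) ^ 2)))
    (w : ℕ → Fin d → ℝ)
    (hupd : ∀ t, w (t + 1) = fun j => w t j -
        η * ((k : ℝ) * p j * ((normB d p (w t)) ^ (k - 1) * w t j
            - (alignA d p wstar (w t)) ^ (k - 1) * wstar j)))
    (hinitB : 0 < normB d p (w 0))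
    (hinit : normB d p (w 0) ≤ |alignA d p wstar (w 0)|) :
    ∀ t : ℕ, popLoss d k p wstar (w t)
      ≤ (1 - η * k * pmin * (alignA d p wstar (w 0)) ^ (2 * k - 2) / 8) ^ t
          * popLoss d k p wstar (w 0) := by
  obtain ⟨κ, hκeq⟩ := hkeven
  have hk2 : k = 2*κ := by omega
  have hκ1 : 1 ≤ κ := by omega
  -- the L2 mass
  have hS0 : 0 < ∑ j, (p j)^2 :=
    Finset.sum_pos (fun j _ => pow_pos (hp j) 2) ⟨⟨0, hd⟩, Finset.mem_univ _⟩
  set m : ℝ := Real.sqrt (∑ j, (p j)^2) with hmdef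
  have hm2 : (∑ j, (p j)^2) = m^2 := (Real.sq_sqrt hS0.le).symm
  have hm0 : 0 < m := Real.sqrt_pos.mpr hS0
  have hple1 : ∀ j, p j ≤ 1 := by
    intro j
    rw [← hp1]
    exact Finset.single_le_sum (fun i _ => (hp i).le) (Finset.mem_univ j)
  have hm1 : m ≤ 1 := by
    have h1 : (∑ j, (p j)^2) ≤ ∑ j, p j :=
      Finset.sum_le_sum fun j _ => by nlinarith [hp j, hple1 j]
    rw [hp1] at h1
    nlinarith [hm2, hm0]
  have hpmin0 : 0 < pmin := by
    obtain ⟨j0, hj0⟩ := hpmin.1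
    rw [← hj0]; exact hp j0
  have hpminle : ∀ j, pmin ≤ p j := fun j => hpmin.2 ⟨j, rfl⟩
  have hηm : η * (10*(k:ℝ)^2*m) ≤ 1 := by
    have hden : (0:ℝ) < 10*(k:ℝ)^2*m := by
      have : (0:ℝ) < (k:ℝ) := by
        have : 0 < k := by omega
        exact_mod_cast this
      positivity
    rw [← le_div_iff₀ hden] at *
    · exact hη
  -- v coordinates
  obtain ⟨v, hv⟩ : ∃ v : ℕ → Fin d → ℝ, ∀ t i, v t i = w t i * wstar i :=
    ⟨_, fun _ _ => rfl⟩
  have hws2 : ∀ i, wstar i ^ 2 = 1 := by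
    intro i; rcases hws i with h | h <;> rw [h] <;> norm_num
  have hAv : ∀ t, alignA d p wstar (w t) = ∑ i, p i * v t i := by
    intro t
    unfold alignA
    refine Finset.sum_congr rfl fun i _ => ?_
    rw [hv t i]; ring
  have hBv : ∀ t, normB d p (w t) = ∑ i, p i * (v t i)^2 := by
    intro t
    unfold normB
    refine Finset.sum_congr rfl fun i _ => ?_
    rw [hv t i, mul_pow, hws2 i, mul_one]
  have hvupd : ∀ t i, v (t+1) i = v t i - η*((k:ℝ)*p i*
      ((normB d p (w t))^(k-1)*v t i - (alignA d p wstar (w t))^(k-1))) := by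
    intro t i
    have h1 := congrFun (hupd t) i
    rw [hv (t+1) i, h1, hv t i]
    have h2 := hws2 i
    linear_combination (η*(k:ℝ)*p i*(alignA d p wstar (w t))^(k-1)) * h2
  -- initial data
  have habs : |alignA d p wstar (w 0)| ^ k = (alignA d p wstar (w 0))^k :=
    Even.pow_abs ⟨κ, by omega⟩ _
  have h2k2even : Even (2*k-2) := ⟨k-1, by omega⟩
  have habs2 : |alignA d p wstar (w 0)|^(2*k-2) = (alignA d p wstar (w 0))^(2*k-2) :=
    Even.pow_abs h2k2even _
  have hA0pos : 0 < |alignA d p wstar (w 0)| := lt_of_lt_of_le hinitB hinit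
  have hA0k : 0 < |alignA d p wstar (w 0)|^k := pow_pos hA0pos k
  have hinv0 : (normB d p (w 0))^k + |alignA d p wstar (w 0)|^k
      ≤ 2*(alignA d p wstar (w 0))^k := by
    have h1 : (normB d p (w 0))^k ≤ |alignA d p wstar (w 0)|^k :=
      pow_le_pow_left₀ hinitB.le hinit k
    linarith [habs.le, habs.ge]
  -- Cauchy-Schwarz at each time
  have hCSt : ∀ t, (alignA d p wstar (w t))^2 ≤ normB d p (w t) := by
    intro t
    have hcs := Finset.sum_mul_sq_le_sq_mul_sq Finset.univ
      (fun i => Real.sqrt (p i)) (fun i => Real.sqrt (p i) * v t i)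
    have e1 : ∀ i : Fin d, Real.sqrt (p i) * (Real.sqrt (p i) * v t i) = p i * v t i := by
      intro i; rw [← mul_assoc, Real.mul_self_sqrt (hp i).le]
    have e2 : ∀ i : Fin d, (Real.sqrt (p i))^2 = p i := fun i => Real.sq_sqrt (hp i).le
    have e3 : ∀ i : Fin d, (Real.sqrt (p i) * v t i)^2 = p i * (v t i)^2 := by
      intro i; rw [mul_pow, Real.sq_sqrt (hp i).le]
    rw [Finset.sum_congr rfl fun i _ => e1 i, Finset.sum_congr rfl fun i _ => e2 i,
      Finset.sum_congr rfl fun i _ => e3 i, hp1, one_mul, ← hAv t, ← hBv t] at hcs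
    exact hcs
  have hLnn : ∀ t, 0 ≤ popLoss d k p wstar (w t) := by
    intro t
    have h1 : ((alignA d p wstar (w t))^k)^2 = ((alignA d p wstar (w t))^2)^k :=
      pow_right_comm _ k 2
    have h2 : ((alignA d p wstar (w t))^2)^k ≤ (normB d p (w t))^k :=
      pow_le_pow_left₀ (sq_nonneg _) (hCSt t) k
    unfold popLoss
    nlinarith only [h1, h2, sq_nonneg ((alignA d p wstar (w t))^k - 1)]
  -- c bounds
  have hA0le1 : |alignA d p wstar (w 0)| ≤ 1 := by
    have h1 : (alignA d p wstar (w 0))^2 ≤ normB d p (w 0) := hCSt 0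
    have h2 : |alignA d p wstar (w 0)|^2 = (alignA d p wstar (w 0))^2 := sq_abs _
    nlinarith [hinit, hA0pos]
  have hA2k2le1 : (alignA d p wstar (w 0))^(2*k-2) ≤ 1 := by
    rw [← habs2]
    exact pow_le_one₀ (abs_nonneg _) hA0le1
  have hA2k2nn : 0 ≤ (alignA d p wstar (w 0))^(2*k-2) := by
    rw [← habs2]; positivity
  have hkr0 : (0:ℝ) < (k:ℝ) := by
    have : 0 < k := by omega
    exact_mod_cast this
  have hkr1 : (1:ℝ) ≤ (k:ℝ) := by
    have : 1 ≤ k := by omega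
    exact_mod_cast this
  have hc0 : 0 ≤ η * k * pmin * (alignA d p wstar (w 0)) ^ (2 * k - 2) / 8 := by
    have := hA2k2nn; positivity
  have hc1 : η * k * pmin * (alignA d p wstar (w 0)) ^ (2 * k - 2) / 8 ≤ 1 := by
    have h1 : η*(k:ℝ)*pmin ≤ η*(k:ℝ)*m := by
      have hj := hpminle
      obtain ⟨j0, hj0⟩ := hpmin.1
      have : pmin ≤ m := by
        rw [← hj0]
        have h2 : (p j0)^2 ≤ m^2 := by
          rw [← hm2]
          exact Finset.single_le_sum (f := fun i => (p i)^2)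
            (fun i _ => sq_nonneg _) (Finset.mem_univ j0)
        exact le_of_pow_le_pow_left₀ two_ne_zero hm0.le h2
      have h3 : (0:ℝ) ≤ η*(k:ℝ) := by positivity
      exact mul_le_mul_of_nonneg_left this h3
    have h2 : η*(k:ℝ)*m ≤ 1 := by
      have hpos : 0 < η*(k:ℝ)*m := by positivity
      have h5 : η*(k:ℝ)*m ≤ η*(k:ℝ)*m*(10*(k:ℝ)) :=
        le_mul_of_one_le_right hpos.le (by linarith [hkr1])
      have h6 : η*(k:ℝ)*m*(10*(k:ℝ)) = η*(10*(k:ℝ)^2*m) := by ring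
      linarith [hηm, h6.le, h6.ge]
    have h4 : η*(k:ℝ)*pmin*(alignA d p wstar (w 0))^(2*k-2) ≤ η*(k:ℝ)*m*1 := by
      apply mul_le_mul (le_trans h1 (le_refl _)) hA2k2le1 hA2k2nn
      positivity
    nlinarith [h4, h2]
  -- main induction
  have key : ∀ t, popLoss d k p wstar (w t)
      ≤ (1 - η * k * pmin * (alignA d p wstar (w 0)) ^ (2 * k - 2) / 8) ^ t
          * popLoss d k p wstar (w 0)
      ∧ (normB d p (w t))^k + |alignA d p wstar (w 0)|^k
          ≤ 2*(alignA d p wstar (w t))^k := by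
    intro t
    induction t with
    | zero => exact ⟨by rw [pow_zero, one_mul], hinv0⟩
    | succ n ih =>
      obtain ⟨ih1, ih2⟩ := ih
      have hv'n : ∀ i, v (n+1) i = v n i - η*((k:ℝ)*p i*
          ((normB d p (w n))^(k-1)*v n i - (alignA d p wstar (w n))^(k-1))) :=
        hvupd n
      have hstep := step_lemma d k κ hk2 hκ1 p hp hp1 m hm2 hm0 hm1 pmin hpmin0
        hpminle η hη0 hηm |alignA d p wstar (w 0)| (abs_nonneg _) hA0k
        (v n) (v (n+1)) (alignA d p wstar (w n)) (normB d p (w n))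
        (hAv n) (hBv n) hv'n ih2
      rw [habs2] at hstep
      have e1 : popLoss d k p wstar (w (n+1))
          = (1/2)*((∑ i, p i*(v (n+1) i)^2)^k - 2*(∑ i, p i*v (n+1) i)^k + 1) := by
        unfold popLoss
        rw [hAv (n+1), hBv (n+1)]
      have e2 : popLoss d k p wstar (w n)
          = (1/2)*((normB d p (w n))^k - 2*(alignA d p wstar (w n))^k + 1) := rfl
      have hstep' : popLoss d k p wstar (w (n+1))
          ≤ (1 - η * k * pmin * (alignA d p wstar (w 0)) ^ (2 * k - 2) / 8)
            * popLoss d k p wstar (w n) := by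
        rw [e1, e2]; exact hstep
      constructor
      · calc popLoss d k p wstar (w (n+1))
            ≤ (1 - η * k * pmin * (alignA d p wstar (w 0)) ^ (2 * k - 2) / 8)
              * popLoss d k p wstar (w n) := hstep'
          _ ≤ (1 - η * k * pmin * (alignA d p wstar (w 0)) ^ (2 * k - 2) / 8)
              * ((1 - η * k * pmin * (alignA d p wstar (w 0)) ^ (2 * k - 2) / 8)^n
                * popLoss d k p wstar (w 0)) := by
              apply mul_le_mul_of_nonneg_left ih1
              linarith [hc1]
          _ = (1 - η * k * pmin * (alignA d p wstar (w 0)) ^ (2 * k - 2) / 8)^(n+1)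
              * popLoss d k p wstar (w 0) := by ring
      · have hLn1 : popLoss d k p wstar (w (n+1)) ≤ popLoss d k p wstar (w n) := by
          have h1 : (1 - η * k * pmin * (alignA d p wstar (w 0)) ^ (2 * k - 2) / 8)
              * popLoss d k p wstar (w n) ≤ popLoss d k p wstar (w n) := by
            nlinarith [hLnn n, hc0]
          exact le_trans hstep' h1
        have h1 : (1 - η * k * pmin * (alignA d p wstar (w 0)) ^ (2 * k - 2) / 8)^n ≤ 1 :=
          pow_le_one₀ (by linarith [hc1]) (by linarith [hc0])
        have h2 : popLoss d k p wstar (w n) ≤ popLoss d k p wstar (w 0) := by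
          have h3 : (1 - η * k * pmin * (alignA d p wstar (w 0)) ^ (2 * k - 2) / 8)^n
              * popLoss d k p wstar (w 0) ≤ popLoss d k p wstar (w 0) := by
            nlinarith [hLnn 0, h1]
          exact le_trans ih1 h3
        have h3 : popLoss d k p wstar (w 0) ≤ (1 - |alignA d p wstar (w 0)|^k)/2 := by
          have e0 : popLoss d k p wstar (w 0)
              = (1/2)*((normB d p (w 0))^k - 2*(alignA d p wstar (w 0))^k + 1) := rfl
          rw [e0]
          linarith [hinv0]
        have e4 : popLoss d k p wstar (w (n+1))
            = (1/2)*((normB d p (w (n+1)))^k - 2*(alignA d p wstar (w (n+1)))^k + 1) := rfl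
        have h5 : popLoss d k p wstar (w (n+1)) ≤ (1 - |alignA d p wstar (w 0)|^k)/2 :=
          le_trans hLn1 (le_trans h2 h3)
        rw [e4] at h5
        linarith [h5]
  intro t
  exact (key t).1
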